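/- Let G be a group, d ∈ ℕ, and let G_• = {G₁, …, G_{d+1}} be a d-step filtration of G: G₁ = G ⊇ G₂ ⊇ … ⊇ G_{d+1} = {1}, each G_i is a normal subgroup of G, and ⁅G_i, G_j⁆ ⊆ G_{i+j} whenever i, j ∈ {1,…,d} and i + j ≤ d + 1. Let L be a normal subgroup of G with L ⊆ G₂. Define L_i := L ∩ G_{i+1} for i = 1, …, d and L_{d+1} := {1}, and set H_i := G_i ×_{L_i} G_i := {(a,b) ∈ G_i × G_i : ab⁻¹ ∈ L_i}. Then H_• = {H₁, …, H_{d+1}} is a d-step filtration of the group G ×_L G := {(a,b) ∈ G × G : ab⁻¹ ∈ L}: H₁ = G ×_L G, H_{d+1} = {1}, H₁ ⊇ H₂ ⊇ … ⊇ H_{d+1}, each H_i is a normal subgroup of G ×_L G, and ⁅H_i, H_j⁆ ⊆ H_{i+j} whenever i, j ∈ {1,…,d} and i + j ≤ d + 1. (Lemma 4.2 of the paper, group-theoretic form.) -/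

import Mathlib

/-- The relatively independent self-product `G ×_L G` of a group `G` over a normal
subgroup `L`, i.e. the subgroup `{(a₁, a₂) ∈ G × G : a₁ * a₂⁻¹ ∈ L}` of `G × G`. -/
def relProd {G : Type*} [Group G] (L : Subgroup G) [hN : L.Normal] : Subgroup (G × G) where
  carrier := {p : G × G | p.1 * p.2⁻¹ ∈ L}
  one_mem' := by simpa using L.one_mem
  mul_mem' := by
    rintro ⟨a₁, a₂⟩ ⟨b₁, b₂⟩ ha hb
    have h : (a₁ * b₁) * (a₂ * b₂)⁻¹ = (a₁ * (b₁ * b₂⁻¹) * a₁⁻¹) * (a₁ * a₂⁻¹) := by group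
    simp only [Set.mem_setOf_eq] at ha hb
    show a₁ * b₁ * (a₂ * b₂)⁻¹ ∈ L
    rw [h]
    exact mul_mem (hN.conj_mem _ hb a₁) ha
  inv_mem' := by
    rintro ⟨a₁, a₂⟩ ha
    simp only [Set.mem_setOf_eq] at ha
    have h : a₁⁻¹ * (a₂⁻¹)⁻¹ = a₁⁻¹ * (a₁ * a₂⁻¹)⁻¹ * (a₁⁻¹)⁻¹ := by group
    show a₁⁻¹ * (a₂⁻¹)⁻¹ ∈ L
    rw [h]
    exact hN.conj_mem _ (L.inv_mem ha) a₁⁻¹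

theorem mem_relProd {G : Type*} [Group G] {L : Subgroup G} [L.Normal] {p : G × G} :
    p ∈ relProd L ↔ p.1 * p.2⁻¹ ∈ L := Iff.rfl

def auxSub {G : Type*} [Group G] (A K : Subgroup G)
    (hK : ∀ x ∈ K, ∀ g : G, g * x * g⁻¹ ∈ K) : Subgroup (G × G) where
  carrier := {p : G × G | p.1 ∈ A ∧ p.2 ∈ A ∧ p.1 * p.2⁻¹ ∈ K}
  one_mem' := ⟨one_mem _, one_mem _, by simpa using one_mem K⟩
  mul_mem' := by
    rintro ⟨a₁, a₂⟩ ⟨b₁, b₂⟩ ⟨ha₁, ha₂, ha⟩ ⟨hb₁, hb₂, hb⟩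
    refine ⟨mul_mem ha₁ hb₁, mul_mem ha₂ hb₂, ?_⟩
    have h : (a₁ * b₁) * (a₂ * b₂)⁻¹ = (a₁ * (b₁ * b₂⁻¹) * a₁⁻¹) * (a₁ * a₂⁻¹) := by group
    show (a₁ * b₁) * (a₂ * b₂)⁻¹ ∈ K
    rw [h]
    exact mul_mem (hK _ hb a₁) ha
  inv_mem' := by
    rintro ⟨a₁, a₂⟩ ⟨ha₁, ha₂, ha⟩
    refine ⟨inv_mem ha₁, inv_mem ha₂, ?_⟩
    have h : a₁⁻¹ * (a₂⁻¹)⁻¹ = a₁⁻¹ * (a₁ * a₂⁻¹)⁻¹ * (a₁⁻¹)⁻¹ := by group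
    show a₁⁻¹ * (a₂⁻¹)⁻¹ ∈ K
    rw [h]
    exact hK _ (inv_mem ha) a₁⁻¹

theorem mem_auxSub {G : Type*} [Group G] {A K : Subgroup G} {hK} {p : G × G} :
    p ∈ auxSub A K hK ↔ p.1 ∈ A ∧ p.2 ∈ A ∧ p.1 * p.2⁻¹ ∈ K := Iff.rfl



open scoped commutatorElement

/-- **Lemma 4.2.** A `d`-step filtration `G_•` of `G` with `L ⊆ G₂` induces a `d`-step
filtration `H_•` of `G ×_L G` given by `H_i = G_i ×_{L_i} G_i` with `L_i = L ∩ G_{i+1}`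
(for `1 ≤ i ≤ d`) and `H_{d+1} = {1}`. -/
theorem filtration_relProd {G : Type*} [Group G] (d : ℕ) (hd : 1 ≤ d)
    (Gf : ℕ → Subgroup G)
    (hG1 : Gf 1 = ⊤) (hGtriv : Gf (d + 1) = ⊥)
    (hGmono : ∀ i, 1 ≤ i → i ≤ d → Gf (i + 1) ≤ Gf i)
    (hGnorm : ∀ i, 1 ≤ i → i ≤ d + 1 → (Gf i).Normal)
    (hGcomm : ∀ i j, 1 ≤ i → 1 ≤ j → i ≤ d → j ≤ d → i + j ≤ d + 1 →
      ⁅Gf i, Gf j⁆ ≤ Gf (i + j))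
    (L : Subgroup G) [L.Normal] (hL : L ≤ Gf 2) :
    ∃ Hf : ℕ → Subgroup (G × G),
      (∀ i, 1 ≤ i → i ≤ d →
        (Hf i : Set (G × G)) =
          {p : G × G | p.1 ∈ Gf i ∧ p.2 ∈ Gf i ∧ p.1 * p.2⁻¹ ∈ L ⊓ Gf (i + 1)}) ∧
      Hf 1 = relProd L ∧
      Hf (d + 1) = ⊥ ∧
      (∀ i, 1 ≤ i → i ≤ d → Hf (i + 1) ≤ Hf i) ∧
      (∀ i, 1 ≤ i → i ≤ d + 1 → ∀ h ∈ Hf i, ∀ g ∈ relProd L, g * h * g⁻¹ ∈ Hf i) ∧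
      (∀ i j, 1 ≤ i → 1 ≤ j → i ≤ d → j ≤ d → i + j ≤ d + 1 →
        ⁅Hf i, Hf j⁆ ≤ Hf (i + j)) := by
  have hLn : L.Normal := inferInstance
  -- monotone chain
  have mono' : ∀ s t, 1 ≤ s → s ≤ t → t ≤ d + 1 → Gf t ≤ Gf s := by
    intro s t hs hst htd
    induction t, hst using Nat.le_induction with
    | base => exact le_refl _
    | succ t hst ih =>
      exact le_trans (hGmono t (by omega) (by omega)) (ih (by omega))
  -- key commutator lemma
  have key : ∀ s t, 1 ≤ s → 1 ≤ t → s ≤ d + 1 → t ≤ d + 1 →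
      ∀ x ∈ Gf s, ∀ y ∈ Gf t, ∀ r, 1 ≤ r → r ≤ d + 1 → r ≤ s + t →
      x * y * x⁻¹ * y⁻¹ ∈ Gf r := by
    intro s t hs ht hsd htd x hx y hy r hr hrd hrst
    by_cases hsc : s = d + 1
    · have : x = 1 := by
        have := hx; rw [hsc, hGtriv, Subgroup.mem_bot] at this; exact this
      simp [this, one_mem]
    by_cases htc : t = d + 1
    · have : y = 1 := by
        have := hy; rw [htc, hGtriv, Subgroup.mem_bot] at this; exact this
      simp [this, one_mem]
    by_cases hst : s + t ≤ d + 1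
    · have h1 : ⁅x, y⁆ ∈ ⁅Gf s, Gf t⁆ := Subgroup.commutator_mem_commutator hx hy
      have h2 : ⁅x, y⁆ ∈ Gf (s + t) := hGcomm s t hs ht (by omega) (by omega) hst h1
      have h3 := mono' r (s + t) hr hrst (by omega) h2
      simpa [commutatorElement_def] using h3
    · set s' := d + 1 - t with hs'
      have hx' : x ∈ Gf s' := mono' s' s (by omega) (by omega) (by omega) hx
      have h1 : ⁅x, y⁆ ∈ ⁅Gf s', Gf t⁆ := Subgroup.commutator_mem_commutator hx' hy
      have h2 : ⁅x, y⁆ ∈ Gf (s' + t) := hGcomm s' t (by omega) ht (by omega) (by omega) (by omega) h1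
      have hst' : s' + t = d + 1 := by omega
      rw [hst', hGtriv, Subgroup.mem_bot] at h2
      have : x * y * x⁻¹ * y⁻¹ = 1 := by
        have := h2; rwa [commutatorElement_def] at this
      rw [this]; exact one_mem _
  -- commutator with an element of L lies in L
  have commL : ∀ x y : G, (x ∈ L ∨ y ∈ L) → x * y * x⁻¹ * y⁻¹ ∈ L := by
    intro x y h
    rcases h with h | h
    · have : x * y * x⁻¹ * y⁻¹ = x * (y * x⁻¹ * y⁻¹ * x) * x⁻¹ := by group
      rw [this]
      exact hLn.conj_mem _ (by
        have : y * x⁻¹ * y⁻¹ * x = (y * x⁻¹ * y⁻¹) * x := by group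
        rw [this]
        exact mul_mem (hLn.conj_mem _ (inv_mem h) y) h) x
    · have : x * y * x⁻¹ * y⁻¹ = (x * y * x⁻¹) * y⁻¹ := by group
      rw [this]
      exact mul_mem (hLn.conj_mem _ h x) (inv_mem h)
  -- conjugation closure of L ⊓ Gf (i+1)
  have hnorm : ∀ i : ℕ, 1 ≤ i ∧ i ≤ d → ∀ x ∈ L ⊓ Gf (i + 1), ∀ g : G,
      g * x * g⁻¹ ∈ L ⊓ Gf (i + 1) := by
    intro i hi x hx g
    rw [Subgroup.mem_inf] at hx ⊢
    exact ⟨hLn.conj_mem x hx.1 g, (hGnorm (i + 1) (by omega) (by omega)).conj_mem x hx.2 g⟩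
  refine ⟨fun i => if h : 1 ≤ i ∧ i ≤ d then auxSub (Gf i) (L ⊓ Gf (i + 1)) (hnorm i h)
      else ⊥, ?_, ?_, ?_, ?_, ?_, ?_⟩
  · -- carrier description
    intro i h1 h2
    beta_reduce
    rw [dif_pos ⟨h1, h2⟩]
    rfl
  · -- Hf 1 = relProd L
    beta_reduce
    rw [dif_pos ⟨le_refl 1, hd⟩]
    have hLG : L ⊓ Gf (1 + 1) = L := inf_eq_left.mpr hL
    ext p
    rw [mem_auxSub, mem_relProd, hLG, hG1]
    simp
  · -- Hf (d+1) = ⊥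
    beta_reduce
    rw [dif_neg (by omega)]
  · -- monotone
    intro i h1 h2
    beta_reduce
    by_cases hc : i + 1 ≤ d
    · rw [dif_pos ⟨by omega, hc⟩, dif_pos ⟨h1, h2⟩]
      intro p hp
      rw [mem_auxSub] at hp ⊢
      obtain ⟨hp1, hp2, hp3⟩ := hp
      refine ⟨hGmono i h1 h2 hp1, hGmono i h1 h2 hp2, ?_⟩
      rw [Subgroup.mem_inf] at hp3 ⊢
      exact ⟨hp3.1, mono' (i + 1) (i + 2) (by omega) (by omega) (by omega) hp3.2⟩
    · rw [dif_neg (by omega)]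
      exact bot_le
  · -- conjugation invariance
    intro i h1 h2 h hh g hg
    beta_reduce at hh ⊢
    by_cases hc : i ≤ d
    · rw [dif_pos ⟨h1, hc⟩] at hh ⊢
      rw [mem_auxSub] at hh ⊢
      obtain ⟨hh1, hh2, hh3⟩ := hh
      rw [mem_relProd] at hg
      have hNi : (Gf i).Normal := hGnorm i h1 (by omega)
      obtain ⟨g1, g2⟩ := g
      obtain ⟨x1, x2⟩ := h
      simp only at hh1 hh2 hh3 hg ⊢
      refine ⟨hNi.conj_mem _ hh1 _, hNi.conj_mem _ hh2 _, ?_⟩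
      show g1 * x1 * g1⁻¹ * (g2 * x2 * g2⁻¹)⁻¹ ∈ L ⊓ Gf (i + 1)
      have hid : g1 * x1 * g1⁻¹ * (g2 * x2 * g2⁻¹)⁻¹ =
          (g1 * (x1 * x2⁻¹) * g1⁻¹) *
          ((g1 * x2 * g1⁻¹) * (g1 * g2⁻¹)⁻¹ * (g1 * x2 * g1⁻¹)⁻¹ * (g1 * g2⁻¹)⁻¹⁻¹) := by
        group
      rw [hid]
      refine mul_mem (hnorm i ⟨h1, hc⟩ _ hh3 g1) ?_
      rw [Subgroup.mem_inf] at hh3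
      rw [Subgroup.mem_inf]
      constructor
      · exact commL _ _ (Or.inr (inv_mem hg))
      · have ha : g1 * x2 * g1⁻¹ ∈ Gf i := hNi.conj_mem _ hh2 g1
        have hv : (g1 * g2⁻¹)⁻¹ ∈ Gf 2 := hL (inv_mem hg)
        exact key i 2 h1 (by omega) (by omega) (by omega) _ ha _ hv (i + 1)
          (by omega) (by omega) (by omega)
    · rw [dif_neg (by omega)] at hh ⊢
      rw [Subgroup.mem_bot] at hh ⊢
      rw [hh]
      group
  · -- commutators
    intro i j hi1 hj1 hi2 hj2 hij
    rw [Subgroup.commutator_le]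
    intro p hp q hq
    beta_reduce at hp hq ⊢
    rw [dif_pos ⟨hi1, hi2⟩] at hp
    rw [dif_pos ⟨hj1, hj2⟩] at hq
    rw [mem_auxSub] at hp hq
    obtain ⟨g1, g2⟩ := p
    obtain ⟨k1, k2⟩ := q
    obtain ⟨hp1, hp2, hp3⟩ := hp
    obtain ⟨hq1, hq2, hq3⟩ := hq
    simp only at hp1 hp2 hp3 hq1 hq2 hq3
    have hc1 : g1 * k1 * g1⁻¹ * k1⁻¹ ∈ Gf (i + j) ∨ True := Or.inr trivial
    by_cases hc : i + j ≤ d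
    · rw [dif_pos ⟨by omega, hc⟩]
      rw [mem_auxSub]
      have e1 : (⁅((g1, g2) : G × G), ((k1, k2) : G × G)⁆).1 = g1 * k1 * g1⁻¹ * k1⁻¹ := rfl
      have e2 : (⁅((g1, g2) : G × G), ((k1, k2) : G × G)⁆).2 = g2 * k2 * g2⁻¹ * k2⁻¹ := rfl
      rw [e1, e2]
      refine ⟨key i j hi1 hj1 (by omega) (by omega) _ hp1 _ hq1 (i + j) (by omega) (by omega)
          (le_refl _),
        key i j hi1 hj1 (by omega) (by omega) _ hp2 _ hq2 (i + j) (by omega) (by omega)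
          (le_refl _), ?_⟩
      -- main computation
      rw [Subgroup.mem_inf] at hp3 hq3
      set u := g1 * g2⁻¹ with hu
      set v := k1 * k2⁻¹ with hv
      set w := g2 * k2 * g2⁻¹ * k2⁻¹ with hw
      have hwG : w ∈ Gf (i + j) := key i j hi1 hj1 (by omega) (by omega) _ hp2 _ hq2
        (i + j) (by omega) (by omega) (le_refl _)
      have hid : (g1 * k1 * g1⁻¹ * k1⁻¹) * (g2 * k2 * g2⁻¹ * k2⁻¹)⁻¹ =
          (u * (g2 * v * g2⁻¹ * v⁻¹) * u⁻¹) *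
          ((u * v) * w * (u * v)⁻¹ * w⁻¹) *
          (w * (u * (v * k2) * u⁻¹ * (v * k2)⁻¹) * w⁻¹) := by
        rw [hu, hv, hw]; group
      rw [hid]
      have m1 : g2 * v * g2⁻¹ * v⁻¹ ∈ L ⊓ Gf (i + j + 1) := by
        rw [Subgroup.mem_inf]
        exact ⟨commL _ _ (Or.inr hq3.1),
          key i (j + 1) hi1 (by omega) (by omega) (by omega) _ hp2 _ hq3.2 (i + j + 1)
            (by omega) (by omega) (by omega)⟩
      have m2 : (u * v) * w * (u * v)⁻¹ * w⁻¹ ∈ L ⊓ Gf (i + j + 1) := by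
        rw [Subgroup.mem_inf]
        refine ⟨commL _ _ (Or.inl (mul_mem hp3.1 hq3.1)), ?_⟩
        have huv : u * v ∈ Gf 2 := hL (mul_mem hp3.1 hq3.1)
        exact key 2 (i + j) (by omega) (by omega) (by omega) (by omega) _ huv _ hwG
          (i + j + 1) (by omega) (by omega) (by omega)
      have m3 : u * (v * k2) * u⁻¹ * (v * k2)⁻¹ ∈ L ⊓ Gf (i + j + 1) := by
        rw [Subgroup.mem_inf]
        refine ⟨commL _ _ (Or.inl hp3.1), ?_⟩
        have hvk : v * k2 ∈ Gf j :=
          mul_mem (mono' j (j + 1) hj1 (by omega) (by omega) hq3.2) hq2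
        exact key (i + 1) j (by omega) hj1 (by omega) (by omega) _ hp3.2 _ hvk
          (i + j + 1) (by omega) (by omega) (by omega)
      exact mul_mem (mul_mem (hnorm (i + j) ⟨by omega, hc⟩ _ m1 u) m2)
        (hnorm (i + j) ⟨by omega, hc⟩ _ m3 w)
    · -- i + j = d + 1 : target is ⊥
      rw [dif_neg (by omega)]
      rw [Subgroup.mem_bot]
      have e1 : g1 * k1 * g1⁻¹ * k1⁻¹ = 1 := by
        have := key i j hi1 hj1 (by omega) (by omega) _ hp1 _ hq1 (i + j) (by omega)
          (by omega) (le_refl _)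
        have hij' : i + j = d + 1 := by omega
        rwa [hij', hGtriv, Subgroup.mem_bot] at this
      have e2 : g2 * k2 * g2⁻¹ * k2⁻¹ = 1 := by
        have := key i j hi1 hj1 (by omega) (by omega) _ hp2 _ hq2 (i + j) (by omega)
          (by omega) (le_refl _)
        have hij' : i + j = d + 1 := by omega
        rwa [hij', hGtriv, Subgroup.mem_bot] at this
      exact Prod.ext e1 e2
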